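/- arXiv:2412.14278 — 2 statements merged into one kernel-verified Lean document; each statement's English description precedes it below -/
import Mathlib

section
/- Fix d ≥ 1, λ > 0, M ≥ 1 and k ≥ 2. Let v_1, …, v_k ∈ ℝ^d (e.g., v_j = ∇f(x_j) for a differentiable f and points x_j) and let s_{ℓ(k)}, …, s_{k−1} ∈ ℝ^d be unit vectors, where ℓ(k) := max{1, k − M − 1}. Set C_k := λ I_d + Σ_{j=ℓ(k)}^{k−1} s_j s_jᵀ. Then the bias term B_k := ‖ C_k⁻¹ Σ_{j=ℓ(k)}^{k−1} s_j s_jᵀ (v_j − v_k) ‖ satisfies B_k ≤ √(d(M+1)/λ) · Σ_{i=ℓ(k)}^{k−1} ‖v_{i+1} − v_i‖. -/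
open Matrix Finset

/-- The Euclidean norm on `Fin n → ℝ`. -/
noncomputable def euclNorm {n : ℕ} (v : Fin n → ℝ) : ℝ := Real.sqrt (∑ i, v i ^ 2)

section helpers

/-- The identification of `Fin n → ℝ` with Euclidean space. -/
noncomputable def toE {n : ℕ} (v : Fin n → ℝ) : EuclideanSpace ℝ (Fin n) :=
  (WithLp.equiv 2 (Fin n → ℝ)).symm v

lemma euclNorm_eq_norm {n : ℕ} (v : Fin n → ℝ) : euclNorm v = ‖toE v‖ := by
  rw [EuclideanSpace.norm_eq]
  simp [euclNorm, toE, sq_abs]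

lemma toE_smul {n : ℕ} (c : ℝ) (a : Fin n → ℝ) : toE (c • a) = c • toE a := rfl
lemma toE_sub {n : ℕ} (a b : Fin n → ℝ) : toE (a - b) = toE a - toE b := rfl
lemma toE_sum {n : ℕ} {ι : Type*} (s : Finset ι) (f : ι → Fin n → ℝ) :
    toE (∑ i ∈ s, f i) = ∑ i ∈ s, toE (f i) := by
  simp [toE, WithLp.toLp_sum]

lemma inner_toE {n : ℕ} (a b : Fin n → ℝ) : (inner ℝ (toE a) (toE b) : ℝ) = a ⬝ᵥ b := by
  simp [toE, PiLp.inner_apply, dotProduct, RCLike.inner_apply, mul_comm]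

lemma euclNorm_sq {n : ℕ} (v : Fin n → ℝ) : euclNorm v ^ 2 = v ⬝ᵥ v := by
  rw [euclNorm_eq_norm, ← real_inner_self_eq_norm_sq, inner_toE]

lemma euclNorm_nonneg {n : ℕ} (v : Fin n → ℝ) : 0 ≤ euclNorm v := by
  rw [euclNorm_eq_norm]; exact norm_nonneg _

lemma abs_dotProduct_le' {n : ℕ} (a b : Fin n → ℝ) :
    |a ⬝ᵥ b| ≤ euclNorm a * euclNorm b := by
  rw [euclNorm_eq_norm, euclNorm_eq_norm, ← inner_toE]
  exact abs_real_inner_le_norm _ _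

lemma tele {E : Type*} [AddCommGroup E] (f : ℕ → E) (j m : ℕ) (h : j ≤ m + 1) :
    ∑ i ∈ Finset.Icc j m, (f (i + 1) - f i) = f (m + 1) - f j := by
  rw [← Finset.Ico_add_one_right_eq_Icc, Finset.sum_Ico_eq_sum_range, Finset.sum_congr rfl
    (fun l _ => by rw [show j + l + 1 = j + (l + 1) by omega]),
    Finset.sum_range_sub (fun l => f (j + l)), Nat.add_sub_cancel' h]
  norm_num

variable {d : ℕ}

lemma sum_mulVec' {ι : Type*} (t : Finset ι) (f : ι → Matrix (Fin d) (Fin d) ℝ) (x : Fin d → ℝ) :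
    (∑ j ∈ t, f j) *ᵥ x = ∑ j ∈ t, f j *ᵥ x := by
  ext i
  simp [Matrix.mulVec, dotProduct, Matrix.sum_apply, Finset.sum_mul, Finset.sum_apply]
  rw [Finset.sum_comm]

lemma mulVec_sum' {ι : Type*} (t : Finset ι) (M : Matrix (Fin d) (Fin d) ℝ) (f : ι → Fin d → ℝ) :
    M *ᵥ (∑ j ∈ t, f j) = ∑ j ∈ t, M *ᵥ f j := by
  rw [← Matrix.mulVecLin_apply, map_sum]
  simp [Matrix.mulVecLin_apply]

lemma dotProduct_sum' {ι : Type*} (t : Finset ι) (x : Fin d → ℝ) (f : ι → Fin d → ℝ) :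
    x ⬝ᵥ (∑ j ∈ t, f j) = ∑ j ∈ t, x ⬝ᵥ f j := by
  simp [dotProduct, Finset.mul_sum, Finset.sum_apply]
  rw [Finset.sum_comm]

lemma vecMulVec_mulVec' (a x : Fin d → ℝ) : vecMulVec a a *ᵥ x = (a ⬝ᵥ x) • a := by
  ext i
  simp only [Matrix.mulVec, dotProduct, vecMulVec_apply, Pi.smul_apply, smul_eq_mul,
    Finset.sum_mul]
  exact Finset.sum_congr rfl fun k _ => by ring

end helpers

/-- Bias-term bound from the proof of Lemma 3.1. -/
theorem stmt_6 (d M k : ℕ) (hd : 1 ≤ d) (hM : 1 ≤ M) (hk : 2 ≤ k)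
    (lam : ℝ) (hlam : 0 < lam)
    (v : ℕ → Fin d → ℝ) (s : ℕ → Fin d → ℝ)
    (hs : ∀ j ∈ Finset.Icc (max 1 (k - M - 1)) (k - 1), euclNorm (s j) = 1) :
    euclNorm ((lam • (1 : Matrix (Fin d) (Fin d) ℝ) +
        ∑ j ∈ Finset.Icc (max 1 (k - M - 1)) (k - 1), vecMulVec (s j) (s j))⁻¹ *ᵥ
      (∑ j ∈ Finset.Icc (max 1 (k - M - 1)) (k - 1),
        vecMulVec (s j) (s j) *ᵥ (v j - v k))) ≤
    Real.sqrt ((d : ℝ) * ((M : ℝ) + 1) / lam) *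
      ∑ i ∈ Finset.Icc (max 1 (k - M - 1)) (k - 1), euclNorm (v (i + 1) - v i) := by
  set ℓ : ℕ := max 1 (k - M - 1) with hℓdef
  set I : Finset ℕ := Finset.Icc ℓ (k - 1) with hIdef
  set S : Matrix (Fin d) (Fin d) ℝ := ∑ j ∈ I, vecMulVec (s j) (s j) with hSdef
  set C : Matrix (Fin d) (Fin d) ℝ := lam • 1 + S with hCdef
  set A : Matrix (Fin d) (Fin d) ℝ := C⁻¹ with hAdef
  set T : ℝ := ∑ i ∈ I, euclNorm (v (i + 1) - v i) with hTdef
  -- quadratic form of C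
  have hCmul : ∀ x : Fin d → ℝ, C *ᵥ x = lam • x + ∑ j ∈ I, (s j ⬝ᵥ x) • s j := by
    intro x
    rw [hCdef, Matrix.add_mulVec, Matrix.smul_mulVec, Matrix.one_mulVec, hSdef,
      sum_mulVec']
    congr 1
    exact Finset.sum_congr rfl fun j _ => vecMulVec_mulVec' _ _
  have hquad : ∀ x : Fin d → ℝ, x ⬝ᵥ (C *ᵥ x) = lam * (x ⬝ᵥ x) + ∑ j ∈ I, (s j ⬝ᵥ x) ^ 2 := by
    intro x
    rw [hCmul x, dotProduct_add, dotProduct_smul, dotProduct_sum']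
    congr 1
    exact Finset.sum_congr rfl fun j _ => by rw [dotProduct_smul, smul_eq_mul, dotProduct_comm x (s j), sq]
  have hsum_sq_nonneg : ∀ x : Fin d → ℝ, 0 ≤ ∑ j ∈ I, (s j ⬝ᵥ x) ^ 2 :=
    fun x => Finset.sum_nonneg fun j _ => sq_nonneg _
  -- C is positive definite
  have hherm : C.IsHermitian := by
    have hsymm : ∀ i j : Fin d, C j i = C i j := by
      intro i j
      simp only [hCdef, hSdef, Matrix.add_apply, Matrix.smul_apply, Matrix.sum_apply,
        vecMulVec_apply, smul_eq_mul]
      rw [Matrix.one_apply, Matrix.one_apply]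
      congr 1
      · simp [eq_comm]
      · exact Finset.sum_congr rfl fun l _ => mul_comm _ _
    ext i j
    rw [Matrix.conjTranspose_apply, star_trivial]
    exact hsymm i j
  have hCpd : C.PosDef := by
    refine Matrix.PosDef.of_dotProduct_mulVec_pos hherm fun x hx => ?_
    have h0 : (0 : ℝ) < x ⬝ᵥ x := by
      rcases eq_or_lt_of_le (Finset.sum_nonneg fun i _ => mul_self_nonneg (x i) :
          (0:ℝ) ≤ x ⬝ᵥ x) with h | h
      · exact absurd (dotProduct_self_eq_zero.1 h.symm) hx
      · exact h
    rw [star_trivial, hquad x]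
    nlinarith [hsum_sq_nonneg x]
  have hdet : IsUnit C.det := hCpd.det_pos.ne'.isUnit
  have hCA : C * A = 1 := Matrix.mul_nonsing_inv _ hdet
  have hCy : ∀ j, C *ᵥ (A *ᵥ s j) = s j := fun j => by
    rw [Matrix.mulVec_mulVec, hCA, Matrix.one_mulVec]
  have hqy : ∀ j, lam * ((A *ᵥ s j) ⬝ᵥ (A *ᵥ s j)) ≤ s j ⬝ᵥ (A *ᵥ s j) := by
    intro j
    have h := hquad (A *ᵥ s j)
    rw [hCy j] at h
    have h2 := hsum_sq_nonneg (A *ᵥ s j)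
    have h3 : (A *ᵥ s j) ⬝ᵥ s j = s j ⬝ᵥ (A *ᵥ s j) := dotProduct_comm _ _
    linarith [h, h2, h3.symm ▸ le_refl (s j ⬝ᵥ (A *ᵥ s j))]
  -- trace bound
  have htr1 : ∀ a : Fin d → ℝ, Matrix.trace (A * vecMulVec a a) = a ⬝ᵥ (A *ᵥ a) := by
    intro a
    simp only [Matrix.trace, Matrix.diag, Matrix.mul_apply, vecMulVec_apply, dotProduct,
      Matrix.mulVec, Finset.mul_sum]
    exact Finset.sum_congr rfl fun i _ => Finset.sum_congr rfl fun l _ => by ring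
  have hApd : A.PosDef := hCpd.inv
  have htrA : 0 ≤ Matrix.trace A := by
    have hdiag : ∀ i : Fin d, 0 ≤ A i i := by
      intro i
      have hne : (Pi.single i (1:ℝ) : Fin d → ℝ) ≠ 0 := by
        intro h0
        have := congr_fun h0 i
        simp at this
      have h := hApd.dotProduct_mulVec_pos hne
      have he : star (Pi.single i (1:ℝ)) ⬝ᵥ (A *ᵥ Pi.single i 1) = A i i := by
        rw [star_trivial, single_dotProduct, Matrix.mulVec_single]
        simp
      rw [he] at h
      exact le_of_lt h
    simp only [Matrix.trace, Matrix.diag]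
    exact Finset.sum_nonneg fun i _ => hdiag i
  have hSC : S = C - lam • 1 := by rw [hCdef]; exact (add_sub_cancel_left _ _).symm
  have htrace : ∑ j ∈ I, s j ⬝ᵥ (A *ᵥ s j) ≤ (d : ℝ) := by
    have e1 : ∑ j ∈ I, s j ⬝ᵥ (A *ᵥ s j) = Matrix.trace (A * S) := by
      rw [hSdef, Finset.mul_sum, Matrix.trace_sum]
      exact Finset.sum_congr rfl fun j _ => (htr1 (s j)).symm
    have e2 : Matrix.trace (A * S) = (d : ℝ) - lam * Matrix.trace A := by
      rw [hSC, mul_sub, Matrix.mul_smul, mul_one, Matrix.trace_sub, Matrix.trace_smul,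
        Matrix.trace_mul_comm, hCA, Matrix.trace_one]
      simp [smul_eq_mul]
    rw [e1, e2]
    nlinarith [htrA, hlam]
  have hqsum : ∑ j ∈ I, ((A *ᵥ s j) ⬝ᵥ (A *ᵥ s j)) ≤ (d : ℝ) / lam := by
    rw [le_div_iff₀ hlam]
    calc (∑ j ∈ I, (A *ᵥ s j) ⬝ᵥ (A *ᵥ s j)) * lam
        = ∑ j ∈ I, lam * ((A *ᵥ s j) ⬝ᵥ (A *ᵥ s j)) := by
          rw [Finset.sum_mul]; exact Finset.sum_congr rfl fun j _ => mul_comm _ _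
      _ ≤ ∑ j ∈ I, s j ⬝ᵥ (A *ᵥ s j) := Finset.sum_le_sum fun j _ => hqy j
      _ ≤ (d : ℝ) := htrace
  -- decomposition of the bias vector
  have hdecomp : A *ᵥ (∑ j ∈ I, vecMulVec (s j) (s j) *ᵥ (v j - v k))
      = ∑ j ∈ I, (s j ⬝ᵥ (v j - v k)) • (A *ᵥ s j) := by
    rw [mulVec_sum']
    refine Finset.sum_congr rfl fun j _ => ?_
    rw [vecMulVec_mulVec', Matrix.mulVec_smul]
  have hnorm1 : euclNorm (A *ᵥ (∑ j ∈ I, vecMulVec (s j) (s j) *ᵥ (v j - v k)))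
      ≤ ∑ j ∈ I, |s j ⬝ᵥ (v j - v k)| * euclNorm (A *ᵥ s j) := by
    rw [hdecomp, euclNorm_eq_norm,
      show toE (∑ j ∈ I, (s j ⬝ᵥ (v j - v k)) • (A *ᵥ s j))
          = ∑ j ∈ I, (s j ⬝ᵥ (v j - v k)) • toE (A *ᵥ s j) from by
        rw [toE_sum]; exact Finset.sum_congr rfl fun j _ => toE_smul _ _]
    refine (norm_sum_le _ _).trans ?_
    refine Finset.sum_le_sum fun j _ => ?_
    rw [norm_smul, Real.norm_eq_abs, euclNorm_eq_norm]
  -- telescoping bound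
  have hT0 : 0 ≤ T := Finset.sum_nonneg fun i _ => euclNorm_nonneg _
  have hwT : ∀ j ∈ I, euclNorm (v j - v k) ≤ T := by
    intro j hj
    rw [hIdef, Finset.mem_Icc] at hj
    have hj1 : 1 ≤ j := le_trans (le_max_left 1 _) hj.1
    have htel := tele v j (k - 1) (by omega)
    have hk1 : k - 1 + 1 = k := by omega
    rw [hk1] at htel
    have e : euclNorm (v j - v k) = euclNorm (∑ i ∈ Finset.Icc j (k - 1), (v (i + 1) - v i)) := by
      rw [htel, euclNorm_eq_norm, euclNorm_eq_norm, toE_sub, toE_sub, norm_sub_rev]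
    rw [e]
    calc euclNorm (∑ i ∈ Finset.Icc j (k - 1), (v (i + 1) - v i))
        ≤ ∑ i ∈ Finset.Icc j (k - 1), euclNorm (v (i + 1) - v i) := by
          rw [euclNorm_eq_norm, toE_sum]
          exact (norm_sum_le _ _).trans
            (le_of_eq (Finset.sum_congr rfl fun i _ => (euclNorm_eq_norm _).symm))
      _ ≤ T := by
          rw [hTdef, hIdef]
          exact Finset.sum_le_sum_of_subset_of_nonneg (Finset.Icc_subset_Icc_left hj.1)
            (fun i _ _ => euclNorm_nonneg _)
  have hcsq : ∑ j ∈ I, (s j ⬝ᵥ (v j - v k)) ^ 2 ≤ ((M : ℝ) + 1) * T ^ 2 := by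
    have hcardn : I.card ≤ M + 1 := by
      rw [hIdef, Nat.card_Icc]
      omega
    have hcard : (I.card : ℝ) ≤ (M : ℝ) + 1 := by
      calc (I.card : ℝ) ≤ ((M + 1 : ℕ) : ℝ) := Nat.cast_le.mpr hcardn
        _ = (M : ℝ) + 1 := by push_cast; ring
    calc ∑ j ∈ I, (s j ⬝ᵥ (v j - v k)) ^ 2 ≤ ∑ _j ∈ I, T ^ 2 := by
          refine Finset.sum_le_sum fun j hj => ?_
          have h1 := abs_dotProduct_le' (s j) (v j - v k)
          rw [hs j hj, one_mul] at h1
          have h2 := h1.trans (hwT j hj)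
          calc (s j ⬝ᵥ (v j - v k)) ^ 2 = |s j ⬝ᵥ (v j - v k)| ^ 2 := (sq_abs _).symm
            _ ≤ T ^ 2 := pow_le_pow_left₀ (abs_nonneg _) h2 2
      _ = I.card * T ^ 2 := by rw [Finset.sum_const, nsmul_eq_mul]
      _ ≤ ((M : ℝ) + 1) * T ^ 2 := mul_le_mul_of_nonneg_right hcard (sq_nonneg _)
  -- Cauchy–Schwarz
  have hCS : ∑ j ∈ I, |s j ⬝ᵥ (v j - v k)| * euclNorm (A *ᵥ s j)
      ≤ Real.sqrt (∑ j ∈ I, (s j ⬝ᵥ (v j - v k)) ^ 2) *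
        Real.sqrt (∑ j ∈ I, (A *ᵥ s j) ⬝ᵥ (A *ᵥ s j)) := by
    have h := Finset.sum_mul_sq_le_sq_mul_sq I (fun j => |s j ⬝ᵥ (v j - v k)|)
      (fun j => euclNorm (A *ᵥ s j))
    have hnn : 0 ≤ ∑ j ∈ I, |s j ⬝ᵥ (v j - v k)| * euclNorm (A *ᵥ s j) :=
      Finset.sum_nonneg fun j _ => mul_nonneg (abs_nonneg _) (euclNorm_nonneg _)
    have h' := Real.sqrt_le_sqrt h
    rw [Real.sqrt_sq hnn] at h'
    refine h'.trans (le_of_eq ?_)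
    rw [Real.sqrt_mul (Finset.sum_nonneg fun j _ => sq_nonneg _)]
    congr 1
    · congr 1
      exact Finset.sum_congr rfl fun j _ => sq_abs _
    · congr 1
      exact Finset.sum_congr rfl fun j _ => euclNorm_sq _
  -- combine
  refine le_trans hnorm1 (le_trans hCS ?_)
  have h1 : Real.sqrt (∑ j ∈ I, (s j ⬝ᵥ (v j - v k)) ^ 2)
      ≤ Real.sqrt (((M : ℝ) + 1) * T ^ 2) := Real.sqrt_le_sqrt hcsq
  have h2 : Real.sqrt (∑ j ∈ I, (A *ᵥ s j) ⬝ᵥ (A *ᵥ s j))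
      ≤ Real.sqrt ((d : ℝ) / lam) := Real.sqrt_le_sqrt hqsum
  calc Real.sqrt (∑ j ∈ I, (s j ⬝ᵥ (v j - v k)) ^ 2) *
        Real.sqrt (∑ j ∈ I, (A *ᵥ s j) ⬝ᵥ (A *ᵥ s j))
      ≤ Real.sqrt (((M : ℝ) + 1) * T ^ 2) * Real.sqrt ((d : ℝ) / lam) :=
        mul_le_mul h1 h2 (Real.sqrt_nonneg _) (Real.sqrt_nonneg _)
    _ = Real.sqrt ((d : ℝ) * ((M : ℝ) + 1) / lam) * T := by
        rw [Real.sqrt_mul (by positivity : (0:ℝ) ≤ (M : ℝ) + 1), Real.sqrt_sq hT0,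
          show (d : ℝ) * ((M : ℝ) + 1) / lam = ((M : ℝ) + 1) * ((d : ℝ) / lam) by ring,
          Real.sqrt_mul (by positivity : (0:ℝ) ≤ (M : ℝ) + 1)]
        ring
end

section
/- Let f : ℝ^d → ℝ be differentiable with L-Lipschitz gradient and bounded below: f(x) ≥ f_* for all x ∈ ℝ^d. Let β ∈ (1/2, 1), q ∈ (0, 1) and S_max > 0. Suppose x_1, …, x_{K+1} ∈ ℝ^d are such that, for each k = 1, …, K, there is a full-column-rank matrix S_k ∈ ℝ^{d×p_k} with ‖S_kᵀ ∇f(x_k)‖² ≥ q ‖∇f(x_k)‖² and λ_max(S_kᵀ S_k) ≤ S_max, and x_{k+1} = x_k − α_k P_k ∇f(x_k) with P_k := S_k(S_kᵀ S_k)⁻¹ S_kᵀ, where either α_k ∈ (β/L, 1/L], or α_k > β/L and f(x_{k+1}) ≤ f(x_k) − α_k ‖P_k ∇f(x_k)‖². Then Σ_{k=1}^{K} ‖∇f(x_k)‖² ≤ 2 S_max L (f(x_1) − f_*) / (q(2β − 1)), and consequently Σ_{k=1}^{K} ‖∇f(x_k)‖ ≤ √( 2 S_max L (f(x_1) − f_*)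 / (q(2β − 1)) ) · √K. -/
open Matrix Finset

lemma dot_nonneg_self {n : ℕ} (v : Fin n → ℝ) : 0 ≤ v ⬝ᵥ v := by
  have := euclNorm_sq v ▸ sq_nonneg (euclNorm v); linarith [this]

lemma dot_le_norm {n : ℕ} (u v : Fin n → ℝ) : u ⬝ᵥ v ≤ euclNorm u * euclNorm v := by
  have h := Finset.sum_mul_sq_le_sq_mul_sq Finset.univ u v
  have h2 : (u ⬝ᵥ v) ^ 2 ≤ (euclNorm u * euclNorm v) ^ 2 := by
    rw [mul_pow, euclNorm_sq, euclNorm_sq]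
    simpa [dotProduct, pow_two] using h
  have hnn : 0 ≤ euclNorm u * euclNorm v := mul_nonneg (euclNorm_nonneg u) (euclNorm_nonneg v)
  nlinarith [abs_nonneg (u ⬝ᵥ v), le_abs_self (u ⬝ᵥ v), sq_abs (u ⬝ᵥ v)]

lemma abs_dot_le_norm {n : ℕ} (u v : Fin n → ℝ) : |u ⬝ᵥ v| ≤ euclNorm u * euclNorm v := by
  rcases abs_cases (u ⬝ᵥ v) with ⟨h, _⟩ | ⟨h, _⟩
  · rw [h]; exact dot_le_norm u v
  · rw [h]
    have := dot_le_norm (-u) v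
    simpa [euclNorm, neg_dotProduct] using this

lemma euclNorm_smul {n : ℕ} (c : ℝ) (v : Fin n → ℝ) : euclNorm (c • v) = |c| * euclNorm v := by
  unfold euclNorm
  rw [← Real.sqrt_sq_eq_abs, ← Real.sqrt_mul (by positivity)]
  congr 1
  simp [Finset.mul_sum, mul_pow]

/-- Descent lemma for differentiable functions with Lipschitz gradient. -/
lemma descent {d : ℕ} {L : ℝ} (hL : 0 < L)
    {f : (Fin d → ℝ) → ℝ} {gradf : (Fin d → ℝ) → Fin d → ℝ}
    (hdiff : Differentiable ℝ f)
    (hgrad : ∀ x v, fderiv ℝ f x v = gradf x ⬝ᵥ v)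
    (hlip : ∀ x y, euclNorm (gradf x - gradf y) ≤ L * euclNorm (x - y))
    (x v : Fin d → ℝ) :
    f (x + v) ≤ f x + gradf x ⬝ᵥ v + L / 2 * euclNorm v ^ 2 := by
  set B := euclNorm v ^ 2 with hB
  have hBnn : 0 ≤ B := by rw [hB]; positivity
  have hvnn : 0 ≤ euclNorm v := euclNorm_nonneg v
  have hderiv : ∀ t : ℝ, HasDerivAt (fun s : ℝ => f (x + s • v)) (gradf (x + t • v) ⬝ᵥ v) t := by
    intro t
    have h1 : HasDerivAt (fun s : ℝ => x + s • v) v t := by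
      simpa using ((hasDerivAt_id t).smul_const v).const_add x
    have h2 := (hdiff (x + t • v)).hasFDerivAt.comp_hasDerivAt t h1
    simpa [hgrad, Function.comp_def] using h2
  have hcont : Continuous (fun t : ℝ => gradf (x + t • v) ⬝ᵥ v) := by
    apply LipschitzWith.continuous (K := Real.toNNReal (L * B))
    apply LipschitzWith.of_dist_le_mul
    intro s t
    rw [Real.dist_eq, Real.dist_eq]
    have hsub : gradf (x + s • v) ⬝ᵥ v - gradf (x + t • v) ⬝ᵥ v
        = (gradf (x + s • v) - gradf (x + t • v)) ⬝ᵥ v := by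
      simp [sub_dotProduct]
    rw [hsub]
    have h1 := abs_dot_le_norm (gradf (x + s • v) - gradf (x + t • v)) v
    have h2 := hlip (x + s • v) (x + t • v)
    have h3 : (x + s • v) - (x + t • v) = (s - t) • v := by
      rw [sub_smul]; abel
    rw [h3, euclNorm_smul] at h2
    have : euclNorm (gradf (x + s • v) - gradf (x + t • v)) * euclNorm v
        ≤ L * |s - t| * euclNorm v * euclNorm v := by
      apply mul_le_mul_of_nonneg_right _ hvnn
      linarith [h2]
    calc |(gradf (x + s • v) - gradf (x + t • v)) ⬝ᵥ v|
        ≤ euclNorm (gradf (x + s • v) - gradf (x + t • v)) * euclNorm v := h1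
      _ ≤ L * |s - t| * euclNorm v * euclNorm v := this
      _ = Real.toNNReal (L * B) * |s - t| := by
          rw [Real.coe_toNNReal _ (by positivity)]
          rw [hB]; ring
  have hFTC : ∫ t in (0:ℝ)..1, gradf (x + t • v) ⬝ᵥ v = f (x + v) - f x := by
    have := intervalIntegral.integral_eq_sub_of_hasDerivAt
      (f := fun s : ℝ => f (x + s • v)) (f' := fun t : ℝ => gradf (x + t • v) ⬝ᵥ v)
      (fun t _ => hderiv t) (hcont.intervalIntegrable 0 1)
    simpa using this
  have hmono : ∫ t in (0:ℝ)..1, gradf (x + t • v) ⬝ᵥ v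
      ≤ ∫ t in (0:ℝ)..1, (gradf x ⬝ᵥ v + (L * B) * t) := by
    apply intervalIntegral.integral_mono_on (by norm_num)
      (hcont.intervalIntegrable 0 1)
      ((by fun_prop : Continuous fun t : ℝ => gradf x ⬝ᵥ v + (L * B) * t).intervalIntegrable 0 1)
    intro t ht
    have hsub : gradf (x + t • v) ⬝ᵥ v - gradf x ⬝ᵥ v
        = (gradf (x + t • v) - gradf x) ⬝ᵥ v := by simp [sub_dotProduct]
    have h1 := dot_le_norm (gradf (x + t • v) - gradf x) v
    have h2 := hlip (x + t • v) x
    have h3 : (x + t • v) - x = t • v := by abel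
    rw [h3, euclNorm_smul, abs_of_nonneg ht.1] at h2
    have h4 : euclNorm (gradf (x + t • v) - gradf x) * euclNorm v
        ≤ L * t * euclNorm v * euclNorm v :=
      mul_le_mul_of_nonneg_right (by linarith) hvnn
    have h5 : (gradf (x + t • v) - gradf x) ⬝ᵥ v ≤ (L * B) * t := by
      calc (gradf (x + t • v) - gradf x) ⬝ᵥ v ≤ _ := h1
        _ ≤ L * t * euclNorm v * euclNorm v := h4
        _ = (L * B) * t := by rw [hB]; ring
    linarith [hsub ▸ h5, hsub]
  have hint : ∫ t in (0:ℝ)..1, (gradf x ⬝ᵥ v + (L * B) * t)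
      = gradf x ⬝ᵥ v + L / 2 * B := by
    rw [intervalIntegral.integral_add (intervalIntegrable_const)
      ((by fun_prop : Continuous fun t : ℝ => (L * B) * t).intervalIntegrable 0 1)]
    rw [intervalIntegral.integral_const_mul, integral_id]
    simp; ring
  rw [hFTC] at hmono
  rw [hint] at hmono
  linarith

/-- Key projection estimates for a full-rank sketching matrix. -/
lemma key_matrix {d pk : ℕ} {Smax q : ℝ} (hSmax : 0 < Smax)
    (S : Matrix (Fin d) (Fin pk) ℝ) (hrank : S.rank = pk)
    (heig : ∀ v : Fin pk → ℝ, v ⬝ᵥ ((Sᵀ * S) *ᵥ v) ≤ Smax * (v ⬝ᵥ v))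
    (g : Fin d → ℝ)
    (halign : q * euclNorm g ^ 2 ≤ euclNorm (Sᵀ *ᵥ g) ^ 2) :
    0 ≤ g ⬝ᵥ ((S * (Sᵀ * S)⁻¹ * Sᵀ) *ᵥ g) ∧
    euclNorm ((S * (Sᵀ * S)⁻¹ * Sᵀ) *ᵥ g) ^ 2 = g ⬝ᵥ ((S * (Sᵀ * S)⁻¹ * Sᵀ) *ᵥ g) ∧
    q * euclNorm g ^ 2 ≤ Smax * (g ⬝ᵥ ((S * (Sᵀ * S)⁻¹ * Sᵀ) *ᵥ g)) := by
  set A : Matrix (Fin pk) (Fin pk) ℝ := Sᵀ * S with hA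
  have hr : A.rank = pk := by rw [hA, Matrix.rank_transpose_mul_self, hrank]
  have htop : LinearMap.range A.mulVecLin = ⊤ := by
    apply Submodule.eq_top_of_finrank_eq
    rw [Module.finrank_pi, Fintype.card_fin]
    exact hr
  have hsurj : Function.Surjective A.mulVec := by
    intro y
    obtain ⟨z, hz⟩ := LinearMap.range_eq_top.mp htop y
    exact ⟨z, hz⟩
  have hunit : IsUnit A := Matrix.mulVec_surjective_iff_isUnit.mp hsurj
  have hdet : IsUnit A.det := (Matrix.isUnit_iff_isUnit_det A).mp hunit
  have hAinv : A * A⁻¹ = 1 := Matrix.mul_nonsing_inv A hdet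
  set u : Fin pk → ℝ := Sᵀ *ᵥ g with hu
  set w : Fin pk → ℝ := A⁻¹ *ᵥ u with hw
  have hAw : A *ᵥ w = u := by rw [hw, Matrix.mulVec_mulVec, hAinv, Matrix.one_mulVec]
  have hPg : (S * (Sᵀ * S)⁻¹ * Sᵀ) *ᵥ g = S *ᵥ w := by
    rw [hw, hu, Matrix.mulVec_mulVec, Matrix.mulVec_mulVec, ← hA, Matrix.mul_assoc]
  have hSS : ∀ a b : Fin pk → ℝ, (S *ᵥ a) ⬝ᵥ (S *ᵥ b) = (A *ᵥ a) ⬝ᵥ b := by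
    intro a b
    rw [Matrix.dotProduct_mulVec, ← Matrix.mulVec_transpose, Matrix.mulVec_mulVec, ← hA]
  have nSw : euclNorm (S *ᵥ w) ^ 2 = u ⬝ᵥ w := by
    rw [euclNorm_sq, hSS, hAw]
  have gPg : g ⬝ᵥ (S *ᵥ w) = u ⬝ᵥ w := by
    rw [Matrix.dotProduct_mulVec, ← Matrix.mulVec_transpose, ← hu]
  have h0 : 0 ≤ u ⬝ᵥ w := by
    rw [← nSw]; positivity
  have halign' : q * euclNorm g ^ 2 ≤ u ⬝ᵥ u := by
    rw [← euclNorm_sq]; exact halign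
  refine ⟨by rw [hPg, gPg]; exact h0, by rw [hPg, gPg, nSw], ?_⟩
  rw [hPg, gPg]
  have huu : u ⬝ᵥ u = (S *ᵥ w) ⬝ᵥ (S *ᵥ u) := by rw [hSS, hAw]
  have hcs : u ⬝ᵥ u ≤ euclNorm (S *ᵥ w) * euclNorm (S *ᵥ u) := by
    rw [huu]; exact dot_le_norm _ _
  have hSu : euclNorm (S *ᵥ u) ^ 2 ≤ Smax * (u ⬝ᵥ u) := by
    rw [euclNorm_sq, hSS, dotProduct_comm]
    exact heig u
  rcases lt_or_eq_of_le (dot_nonneg_self u) with hpos | hzero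
  · have hsq : (u ⬝ᵥ u) ^ 2 ≤ (u ⬝ᵥ w) * (Smax * (u ⬝ᵥ u)) := by
      have h1 : (u ⬝ᵥ u) ^ 2 ≤ euclNorm (S *ᵥ w) ^ 2 * euclNorm (S *ᵥ u) ^ 2 := by
        nlinarith [dot_nonneg_self u, euclNorm_nonneg (S *ᵥ w), euclNorm_nonneg (S *ᵥ u)]
      calc (u ⬝ᵥ u) ^ 2 ≤ euclNorm (S *ᵥ w) ^ 2 * euclNorm (S *ᵥ u) ^ 2 := h1
        _ = (u ⬝ᵥ w) * euclNorm (S *ᵥ u) ^ 2 := by rw [nSw]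
        _ ≤ (u ⬝ᵥ w) * (Smax * (u ⬝ᵥ u)) := mul_le_mul_of_nonneg_left hSu h0
    have huw : u ⬝ᵥ u ≤ Smax * (u ⬝ᵥ w) := by nlinarith
    linarith
  · have h1 : q * euclNorm g ^ 2 ≤ 0 := by rw [← hzero] at halign'; exact halign'
    have h2 := mul_nonneg hSmax.le h0
    linarith

/-- Deterministic version of Theorem 3.4: summability of squared gradient norms for
subspace gradient descent with backtracking line search under sure alignment. -/
theorem stmt_15 (d K : ℕ) (hK : 1 ≤ K)
    (L β q Smax fstar : ℝ)
    (hL : 0 < L) (hβ : 1 / 2 < β ∧ β < 1) (hq : 0 < q ∧ q < 1) (hSmax : 0 < Smax)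
    (f : (Fin d → ℝ) → ℝ) (gradf : (Fin d → ℝ) → Fin d → ℝ)
    (hdiff : Differentiable ℝ f)
    (hgrad : ∀ x v, fderiv ℝ f x v = gradf x ⬝ᵥ v)
    (hlip : ∀ x y, euclNorm (gradf x - gradf y) ≤ L * euclNorm (x - y))
    (hbelow : ∀ z, fstar ≤ f z)
    (x : ℕ → Fin d → ℝ) (p : ℕ → ℕ)
    (S : (k : ℕ) → Matrix (Fin d) (Fin (p k)) ℝ) (α : ℕ → ℝ)
    (hrank : ∀ k ∈ Finset.Icc 1 K, (S k).rank = p k)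
    (halign : ∀ k ∈ Finset.Icc 1 K,
      q * euclNorm (gradf (x k)) ^ 2 ≤ euclNorm ((S k)ᵀ *ᵥ gradf (x k)) ^ 2)
    (heig : ∀ k ∈ Finset.Icc 1 K, ∀ v : Fin (p k) → ℝ,
      v ⬝ᵥ (((S k)ᵀ * S k) *ᵥ v) ≤ Smax * (v ⬝ᵥ v))
    (hupd : ∀ k ∈ Finset.Icc 1 K,
      x (k + 1) = x k - α k • ((S k * ((S k)ᵀ * S k)⁻¹ * (S k)ᵀ) *ᵥ gradf (x k)))
    (hstep : ∀ k ∈ Finset.Icc 1 K, β / L < α k ∧ (α k ≤ 1 / L ∨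
      f (x (k + 1)) ≤ f (x k) -
        α k * euclNorm ((S k * ((S k)ᵀ * S k)⁻¹ * (S k)ᵀ) *ᵥ gradf (x k)) ^ 2)) :
    ∑ k ∈ Finset.Icc 1 K, euclNorm (gradf (x k)) ^ 2 ≤
      2 * Smax * L * (f (x 1) - fstar) / (q * (2 * β - 1)) ∧
    ∑ k ∈ Finset.Icc 1 K, euclNorm (gradf (x k)) ≤
      Real.sqrt (2 * Smax * L * (f (x 1) - fstar) / (q * (2 * β - 1))) *
        Real.sqrt (K : ℝ) := by
  obtain ⟨hβ1, hβ2⟩ := hβ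
  obtain ⟨hq1, hq2⟩ := hq
  have hden : 0 < q * (2 * β - 1) := by nlinarith
  have hc : 0 < 2 * Smax * L := by positivity
  -- per-step decrease
  have hstepdec : ∀ k ∈ Finset.Icc 1 K,
      q * (2 * β - 1) * euclNorm (gradf (x k)) ^ 2
        ≤ 2 * Smax * L * (f (x k) - f (x (k + 1))) := by
    intro k hk
    obtain ⟨h0, hsq, hlow⟩ := key_matrix hSmax (S k) (hrank k hk) (heig k hk)
      (gradf (x k)) (halign k hk)
    set t := gradf (x k) ⬝ᵥ ((S k * ((S k)ᵀ * S k)⁻¹ * (S k)ᵀ) *ᵥ gradf (x k)) with ht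
    obtain ⟨hα1, hα2⟩ := hstep k hk
    have hβL : 0 < β / L := by positivity
    have hαpos : 0 < α k := lt_trans hβL hα1
    have ha1 : β < α k * L := (div_lt_iff₀ hL).mp hα1
    have hdec : f (x (k + 1)) ≤ f (x k) - (2 * β - 1) / (2 * L) * t := by
      rcases hα2 with hcase | hcase
      · have h1a : α k * L ≤ 1 := by
          rw [le_div_iff₀ hL] at hcase; exact hcase
        have hx : x (k + 1)
            = x k + (-(α k)) • ((S k * ((S k)ᵀ * S k)⁻¹ * (S k)ᵀ) *ᵥ gradf (x k)) := by
          rw [hupd k hk, neg_smul, ← sub_eq_add_neg]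
        have hd := descent hL hdiff hgrad hlip (x k)
          ((-(α k)) • ((S k * ((S k)ᵀ * S k)⁻¹ * (S k)ᵀ) *ᵥ gradf (x k)))
        rw [← hx] at hd
        have hdot : gradf (x k) ⬝ᵥ ((-(α k)) • ((S k * ((S k)ᵀ * S k)⁻¹ * (S k)ᵀ) *ᵥ gradf (x k)))
            = -(α k) * t := by
          rw [dotProduct_smul, ht, smul_eq_mul]
        have hnorm : euclNorm ((-(α k)) • ((S k * ((S k)ᵀ * S k)⁻¹ * (S k)ᵀ) *ᵥ gradf (x k))) ^ 2
            = α k ^ 2 * t := by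
          rw [euclNorm_smul, abs_neg, abs_of_pos hαpos, mul_pow, hsq, ht]
        rw [hdot, hnorm] at hd
        have e1 : 0 ≤ t * (1 - α k * L) * (1 + α k * L) := by
          apply mul_nonneg (mul_nonneg h0 (by linarith))
          nlinarith
        have e2 : 0 ≤ t * (α k * L - β) := mul_nonneg h0 (by linarith)
        have hscal : (2 * β - 1) / (2 * L) * t ≤ α k * t - L / 2 * (α k ^ 2 * t) := by
          rw [div_mul_eq_mul_div, div_le_iff₀ (by positivity)]
          nlinarith [e1, e2]
        linarith
      · rw [hsq] at hcase
        have hco : (2 * β - 1) / (2 * L) ≤ α k := by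
          rw [div_le_iff₀ (by positivity)]
          nlinarith
        have := mul_le_mul_of_nonneg_right hco h0
        linarith
    have h5 : Smax * (2 * β - 1) * t ≤ 2 * Smax * L * (f (x k) - f (x (k + 1))) := by
      have h6 : (2 * β - 1) / (2 * L) * t ≤ f (x k) - f (x (k + 1)) := by linarith
      have h7 := mul_le_mul_of_nonneg_left h6 hc.le
      have h8 : 2 * Smax * L * ((2 * β - 1) / (2 * L) * t) = Smax * (2 * β - 1) * t := by
        field_simp
      linarith [h8 ▸ h7]
    have h9 := mul_le_mul_of_nonneg_left hlow (by linarith : (0:ℝ) ≤ 2 * β - 1)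
    nlinarith [h5, h9]
  -- telescoping
  have hsum := Finset.sum_le_sum hstepdec
  rw [← Finset.mul_sum, ← Finset.mul_sum] at hsum
  have htel : ∑ k ∈ Finset.Icc 1 K, (f (x k) - f (x (k + 1))) = f (x 1) - f (x (K + 1)) := by
    rw [← Finset.Ico_add_one_right_eq_Icc, Finset.sum_Ico_eq_sum_range]
    have := Finset.sum_range_sub' (fun i => f (x (1 + i))) K
    rw [add_comm 1 K] at this
    exact this
  rw [htel] at hsum
  set Sq := ∑ k ∈ Finset.Icc 1 K, euclNorm (gradf (x k)) ^ 2 with hSq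
  have hfK : fstar ≤ f (x (K + 1)) := hbelow _
  have hR : 0 ≤ f (x 1) - fstar := by linarith [hbelow (x 1)]
  have hmain : Sq ≤ 2 * Smax * L * (f (x 1) - fstar) / (q * (2 * β - 1)) := by
    rw [le_div_iff₀ hden]
    have h9 : 2 * Smax * L * (f (x 1) - f (x (K + 1)))
        ≤ 2 * Smax * L * (f (x 1) - fstar) :=
      mul_le_mul_of_nonneg_left (by linarith) hc.le
    nlinarith [hsum, h9]
  refine ⟨hmain, ?_⟩
  have hbnd : 0 ≤ 2 * Smax * L * (f (x 1) - fstar) / (q * (2 * β - 1)) :=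
    div_nonneg (mul_nonneg hc.le hR) hden.le
  have hcard : ((Finset.Icc 1 K).card : ℝ) = (K : ℝ) := by
    rw [Nat.card_Icc]; simp
  have hcs2 : (∑ k ∈ Finset.Icc 1 K, euclNorm (gradf (x k))) ^ 2 ≤ (K : ℝ) * Sq := by
    have := sq_sum_le_card_mul_sum_sq
      (s := Finset.Icc 1 K) (f := fun k => euclNorm (gradf (x k)))
    rw [hSq, ← hcard]
    exact_mod_cast this
  have hSsnn : 0 ≤ ∑ k ∈ Finset.Icc 1 K, euclNorm (gradf (x k)) :=
    Finset.sum_nonneg fun _ _ => euclNorm_nonneg _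
  calc ∑ k ∈ Finset.Icc 1 K, euclNorm (gradf (x k))
      = Real.sqrt ((∑ k ∈ Finset.Icc 1 K, euclNorm (gradf (x k))) ^ 2) :=
        (Real.sqrt_sq hSsnn).symm
    _ ≤ Real.sqrt ((K : ℝ) * Sq) := Real.sqrt_le_sqrt hcs2
    _ ≤ Real.sqrt ((2 * Smax * L * (f (x 1) - fstar) / (q * (2 * β - 1))) * (K : ℝ)) := by
        apply Real.sqrt_le_sqrt
        rw [mul_comm]
        exact mul_le_mul_of_nonneg_right hmain (Nat.cast_nonneg K)
    _ = Real.sqrt (2 * Smax * L * (f (x 1) - fstar) / (q * (2 * β - 1))) *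
          Real.sqrt (K : ℝ) := Real.sqrt_mul hbnd _
end
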